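/- arXiv:0905.0294 — 2 statements merged into one kernel-verified Lean document; each statement's English description precedes it below -/
import Mathlib

section
/- For every real x ≥ 1, the number N₋(x) of positive integers n ≤ x with μ(n) = −1 satisfies N₋(x) = −M(√x) + (1/2)·Σ_{i,j=1}^{⌊√x⌋} μ(i)·μ(j)·⌊x/(i·j)⌋ + (1/2)·Σ_{i=1}^{⌊√x⌋} μ(i)·⌊x/i²⌋. -/
open ArithmeticFunction Finset

noncomputable def Mertens (x : ℝ) : ℤ := ∑ k ∈ Finset.Icc 1 ⌊x⌋₊, moebius k

noncomputable def Nplus (x : ℝ) : ℕ := ((Finset.Icc 1 ⌊x⌋₊).filter (fun n => moebius n = 1)).card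

noncomputable def Nminus (x : ℝ) : ℕ := ((Finset.Icc 1 ⌊x⌋₊).filter (fun n => moebius n = -1)).card

noncomputable def Nzero (x : ℝ) : ℕ := ((Finset.Icc 1 ⌊x⌋₊).filter (fun n => moebius n = 0)).card

noncomputable def Qsf (x : ℝ) : ℕ := ((Finset.Icc 1 ⌊x⌋₊).filter (fun n => moebius n ≠ 0)).card


lemma count_mult (N c : ℕ) : ((N / c : ℕ) : ℤ) = ∑ n ∈ Icc 1 N, (if c ∣ n then (1:ℤ) else 0) := by
  rw [show Icc 1 N = Ioc 0 N from rfl, Finset.sum_boole]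
  simp [Nat.Ioc_filter_dvd_card_eq_div]

lemma divisors_filter (m n : ℕ) (h1 : 1 ≤ n) (h2 : n ≤ m) :
    (Icc 1 m).filter (· ∣ n) = n.divisors := by
  ext d
  simp only [mem_filter, mem_Icc, Nat.mem_divisors]
  constructor
  · rintro ⟨_, hd⟩; exact ⟨hd, by omega⟩
  · rintro ⟨hd, -⟩
    exact ⟨⟨Nat.pos_of_dvd_of_pos hd (by omega), le_trans (Nat.le_of_dvd (by omega) hd) h2⟩, hd⟩

lemma sum_div_moebius (n : ℕ) (hn : 1 ≤ n) :
    ∑ d ∈ n.divisors, (moebius d : ℤ) = if n = 1 then 1 else 0 := by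
  have := congrArg (fun f : ArithmeticFunction ℤ => f n) moebius_mul_coe_zeta
  simp only [coe_mul_zeta_apply, one_apply] at this
  rw [this]

lemma Tone (m : ℕ) (hm : 1 ≤ m) :
    ∑ b ∈ Icc 1 m, (moebius b : ℤ) * ((m / b : ℕ) : ℤ) = 1 := by
  have : ∑ b ∈ Icc 1 m, (moebius b : ℤ) * ((m / b : ℕ) : ℤ)
      = ∑ n ∈ Icc 1 m, ∑ b ∈ Icc 1 m, (if b ∣ n then (moebius b : ℤ) else 0) := by
    rw [Finset.sum_comm]
    refine Finset.sum_congr rfl fun b _ => ?_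
    rw [count_mult m b, Finset.mul_sum]
    exact Finset.sum_congr rfl fun n _ => by split <;> simp
  rw [this]
  have : ∀ n ∈ Icc 1 m, (∑ b ∈ Icc 1 m, if b ∣ n then (moebius b : ℤ) else 0)
      = if n = 1 then 1 else 0 := by
    intro n hn
    simp only [mem_Icc] at hn
    rw [← Finset.sum_filter, divisors_filter m n hn.1 hn.2, sum_div_moebius n hn.1]
  rw [Finset.sum_congr rfl this, Finset.sum_ite_eq' (Icc 1 m) 1 (fun _ => (1:ℤ))]
  simp [hm]

-- full-range inner sum equals 1
lemma inner_full (N a : ℕ) (ha1 : 1 ≤ a) (ha2 : a ≤ N) :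
    ∑ b ∈ Icc 1 N, (moebius b : ℤ) * ((N / (a * b) : ℕ) : ℤ) = 1 := by
  have hNa : 1 ≤ N / a := Nat.one_le_div_iff (by omega) |>.2 ha2
  have hsub : Icc 1 (N / a) ⊆ Icc 1 N :=
    Finset.Icc_subset_Icc le_rfl (Nat.div_le_self N a)
  have key : ∀ b : ℕ, N / (a * b) = (N / a) / b := fun b => (Nat.div_div_eq_div_mul N a b).symm
  rw [← Tone (N / a) hNa]
  rw [← Finset.sum_subset hsub]
  · exact Finset.sum_congr rfl fun b _ => by rw [key]
  · intro b hb hb'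
    simp only [mem_Icc] at hb hb'
    have : N / a < b := by omega
    rw [key, Nat.div_eq_of_lt (by omega)]
    simp

lemma hyperbola (N s : ℕ) (hs1 : 1 ≤ s) (hsN : s ≤ N) (hN : N < (s + 1) * (s + 1)) :
    ∑ a ∈ Icc 1 s, ∑ b ∈ Icc 1 s, (moebius a : ℤ) * moebius b * ((N / (a * b) : ℕ) : ℤ)
      = 2 * (∑ a ∈ Icc 1 s, (moebius a : ℤ)) - ∑ n ∈ Icc 1 N, (moebius n : ℤ) := by
  classical
  set I := Icc 1 s with hI
  set J := Ioc s N with hJ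
  have hsplit : Icc 1 N = I ∪ J := by
    rw [hI, hJ, show Icc 1 N = Ioc 0 N from rfl, show Icc 1 s = Ioc 0 s from rfl]
    rw [Finset.Ioc_union_Ioc_eq_Ioc (Nat.zero_le s) hsN]
  have hdisj : Disjoint I J := by
    rw [hI, hJ]; rw [Finset.disjoint_left]
    intro a haI haJ; simp only [mem_Icc, mem_Ioc] at haI haJ; omega
  have hIN : I ⊆ Icc 1 N := by rw [hsplit]; exact Finset.subset_union_left
  -- define f
  set f : ℕ → ℕ → ℤ := fun a b => (moebius a : ℤ) * moebius b * ((N / (a * b) : ℕ) : ℤ) with hf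
  have hJJ : ∀ a ∈ J, ∀ b ∈ J, f a b = 0 := by
    intro a ha b hb
    simp only [hJ, mem_Ioc] at ha hb
    have : N / (a * b) = 0 := Nat.div_eq_of_lt (by nlinarith)
    simp only [hf, this, Nat.cast_zero, mul_zero]
  -- full sum = M(N)
  have hfull : ∑ a ∈ Icc 1 N, ∑ b ∈ Icc 1 N, f a b = ∑ n ∈ Icc 1 N, (moebius n : ℤ) := by
    refine Finset.sum_congr rfl fun a ha => ?_
    simp only [mem_Icc] at ha
    have : ∑ b ∈ Icc 1 N, f a b
        = (moebius a : ℤ) * ∑ b ∈ Icc 1 N, (moebius b : ℤ) * ((N / (a * b) : ℕ) : ℤ) := by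
      rw [Finset.mul_sum]; exact Finset.sum_congr rfl fun b _ => by ring
    rw [this, inner_full N a ha.1 ha.2, mul_one]
  -- inner full-range sums for a ∈ I
  have hinner : ∀ a ∈ I, ∑ b ∈ Icc 1 N, f a b = (moebius a : ℤ) := by
    intro a ha
    simp only [hI, mem_Icc] at ha
    have : ∑ b ∈ Icc 1 N, f a b
        = (moebius a : ℤ) * ∑ b ∈ Icc 1 N, (moebius b : ℤ) * ((N / (a * b) : ℕ) : ℤ) := by
      rw [Finset.mul_sum]; exact Finset.sum_congr rfl fun b _ => by ring
    rw [this, inner_full N a ha.1 (le_trans ha.2 hsN), mul_one]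
  have hsymm : ∀ a b, f a b = f b a := by
    intro a b; simp only [hf]; rw [mul_comm a b]; ring
  -- split
  have e1 : ∑ a ∈ Icc 1 N, ∑ b ∈ Icc 1 N, f a b
      = (∑ a ∈ I, ∑ b ∈ I, f a b) + (∑ a ∈ I, ∑ b ∈ J, f a b)
        + ((∑ a ∈ J, ∑ b ∈ I, f a b) + (∑ a ∈ J, ∑ b ∈ J, f a b)) := by
    rw [hsplit, Finset.sum_union hdisj]
    congr 1
    · rw [← Finset.sum_add_distrib]
      exact Finset.sum_congr rfl fun a _ => (Finset.sum_union hdisj)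
    · rw [← Finset.sum_add_distrib]
      exact Finset.sum_congr rfl fun a _ => (Finset.sum_union hdisj)
  have eJJ : ∑ a ∈ J, ∑ b ∈ J, f a b = 0 :=
    Finset.sum_eq_zero fun a ha => Finset.sum_eq_zero fun b hb => hJJ a ha b hb
  have eIJ : ∑ a ∈ I, ∑ b ∈ J, f a b
      = (∑ a ∈ I, (moebius a : ℤ)) - ∑ a ∈ I, ∑ b ∈ I, f a b := by
    rw [← Finset.sum_sub_distrib]
    refine Finset.sum_congr rfl fun a ha => ?_
    have := hinner a ha
    rw [hsplit, Finset.sum_union hdisj] at this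
    omega
  have eJI : ∑ a ∈ J, ∑ b ∈ I, f a b = ∑ a ∈ I, ∑ b ∈ J, f a b := by
    rw [Finset.sum_comm]
    exact Finset.sum_congr rfl fun a _ => Finset.sum_congr rfl fun b _ => hsymm b a
  have := hfull
  rw [e1, eJJ, eJI, eIJ] at this
  -- goal: ∑∑ f over I = 2 ∑ μ over I − M(N)
  have goal_eq : ∑ a ∈ Icc 1 s, ∑ b ∈ Icc 1 s,
      (moebius a : ℤ) * moebius b * ((N / (a * b) : ℕ) : ℤ) = ∑ a ∈ I, ∑ b ∈ I, f a b := rfl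
  rw [goal_eq]
  omega

lemma sq_dvd_iff {n a b : ℕ} (hn : 0 < n) (hab : b ^ 2 * a = n) (ha : Squarefree a)
    (d : ℕ) : d * d ∣ n ↔ d ∣ b := by
  have hb0 : b ≠ 0 := by rintro rfl; simp at hab; omega
  have ha0 : a ≠ 0 := by rintro rfl; simp at hab; omega
  constructor
  · intro hd
    have hd0 : d ≠ 0 := by rintro rfl; simp at hd; omega
    rw [← Nat.factorization_le_iff_dvd hd0 hb0]
    intro p
    have h1 : (d * d).factorization ≤ n.factorization :=
      (Nat.factorization_le_iff_dvd (by positivity) (by omega)).2 hd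
    have h2 := h1 p
    rw [Nat.factorization_mul hd0 hd0] at h2
    rw [← hab, Nat.factorization_mul (by positivity) ha0, Nat.factorization_pow] at h2
    have h3 : a.factorization p ≤ 1 := ha.natFactorization_le_one p
    simp only [Finsupp.coe_add, Finsupp.coe_smul, Pi.add_apply, Pi.smul_apply,
      smul_eq_mul] at h2 ⊢
    omega
  · intro hd
    calc d * d ∣ b * b := mul_dvd_mul hd hd
    _ = b ^ 2 := (sq b).symm
    _ ∣ n := hab ▸ dvd_mul_right _ _

lemma sqfree_indicator (n : ℕ) (hn : 1 ≤ n) (s : ℕ) (hchar : ∀ d : ℕ, 1 ≤ d → d * d ∣ n → d ≤ s) :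
    (∑ d ∈ Icc 1 s, if d * d ∣ n then (moebius d : ℤ) else 0)
      = if Squarefree n then 1 else 0 := by
  obtain ⟨a, b, ha0, hb0, hab, ha⟩ := Nat.sq_mul_squarefree_of_pos (by omega : 0 < n)
  have hfilter : (Icc 1 s).filter (fun d => d * d ∣ n) = b.divisors := by
    ext d
    simp only [mem_filter, mem_Icc, Nat.mem_divisors]
    constructor
    · rintro ⟨-, hd⟩; exact ⟨(sq_dvd_iff (by omega) hab ha d).1 hd, by omega⟩
    · rintro ⟨hd, -⟩
      have hdd : d * d ∣ n := (sq_dvd_iff (by omega) hab ha d).2 hd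
      have hd1 : 1 ≤ d := Nat.pos_of_dvd_of_pos hd (by omega)
      exact ⟨⟨hd1, hchar d hd1 hdd⟩, hdd⟩
  rw [← Finset.sum_filter, hfilter, sum_div_moebius b (by omega)]
  congr 1
  refine propext ?_
  constructor
  · rintro rfl; rw [← hab]; simpa using ha
  · intro hsq
    have : b * b ∣ n := by rw [← sq]; exact hab ▸ dvd_mul_right _ _
    have := hsq b this
    simpa [Nat.isUnit_iff] using this

lemma Qcount (N s : ℕ) (hN : 1 ≤ N)
    (hchar : ∀ d : ℕ, 1 ≤ d → (d ≤ s ↔ d * d ≤ N)) :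
    ∑ d ∈ Icc 1 s, (moebius d : ℤ) * ((N / (d * d) : ℕ) : ℤ)
      = ∑ n ∈ Icc 1 N, (if Squarefree n then (1:ℤ) else 0) := by
  have step : ∑ d ∈ Icc 1 s, (moebius d : ℤ) * ((N / (d * d) : ℕ) : ℤ)
      = ∑ n ∈ Icc 1 N, ∑ d ∈ Icc 1 s, (if d * d ∣ n then (moebius d : ℤ) else 0) := by
    rw [Finset.sum_comm]
    refine Finset.sum_congr rfl fun d _ => ?_
    rw [count_mult N (d * d), Finset.mul_sum]
    exact Finset.sum_congr rfl fun n _ => by split <;> simp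
  rw [step]
  refine Finset.sum_congr rfl fun n hn => ?_
  simp only [mem_Icc] at hn
  refine sqfree_indicator n hn.1 s fun d hd1 hdd => ?_
  exact (hchar d hd1).2 (le_trans (Nat.le_of_dvd (by omega) hdd) hn.2)

lemma moebius_tri (n : ℕ) : moebius n = 1 ∨ moebius n = -1 ∨ moebius n = 0 := by
  by_cases h : Squarefree n
  · rw [moebius_apply_of_squarefree h]
    rcases Nat.even_or_odd (cardFactors n) with he | ho
    · left; exact he.neg_one_pow
    · right; left; exact ho.neg_one_pow
  · right; right; exact moebius_eq_zero_of_not_squarefree h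

lemma sum_moebius_split (N : ℕ) :
    ∑ n ∈ Icc 1 N, (moebius n : ℤ)
      = (((Icc 1 N).filter (fun n => moebius n = 1)).card : ℤ)
        - (((Icc 1 N).filter (fun n => moebius n = -1)).card : ℤ) := by
  classical
  rw [← Finset.sum_filter_add_sum_filter_not (Icc 1 N) (fun n => moebius n = 1)]
  have h1 : ∑ n ∈ (Icc 1 N).filter (fun n => moebius n = 1), (moebius n : ℤ)
      = (((Icc 1 N).filter (fun n => moebius n = 1)).card : ℤ) := by
    rw [Finset.sum_congr rfl (fun n hn => ?_), Finset.sum_const, nsmul_eq_mul, mul_one]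
    simp only [mem_filter] at hn; rw [hn.2]
  have h2 : ∑ n ∈ (Icc 1 N).filter (fun n => ¬ moebius n = 1), (moebius n : ℤ)
      = -(((Icc 1 N).filter (fun n => moebius n = -1)).card : ℤ) := by
    rw [← Finset.sum_filter_add_sum_filter_not ((Icc 1 N).filter (fun n => ¬ moebius n = 1))
      (fun n => moebius n = -1)]
    have e1 : ((Icc 1 N).filter (fun n => ¬ moebius n = 1)).filter (fun n => moebius n = -1)
        = (Icc 1 N).filter (fun n => moebius n = -1) := by
      rw [Finset.filter_filter]
      exact Finset.filter_congr fun n _ => by constructor <;> (intro h; first | exact h.2 | exact ⟨by rw [h]; decide, h⟩)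
    have e2 : ∑ n ∈ (((Icc 1 N).filter (fun n => ¬ moebius n = 1)).filter
        (fun n => ¬ moebius n = -1)), (moebius n : ℤ) = 0 := by
      refine Finset.sum_eq_zero fun n hn => ?_
      simp only [mem_filter] at hn
      rcases moebius_tri n with h | h | h
      · exact absurd h hn.1.2
      · exact absurd h hn.2
      · simp [h]
    rw [e1, e2, add_zero]
    rw [Finset.sum_congr rfl (fun n hn => ?_), Finset.sum_const, nsmul_eq_mul, mul_neg_one]
    simp only [mem_filter] at hn; rw [hn.2]
  rw [h1, h2]; ring

lemma card_ne_zero_split (N : ℕ) :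
    (((Icc 1 N).filter (fun n => moebius n ≠ 0)).card : ℤ)
      = (((Icc 1 N).filter (fun n => moebius n = 1)).card : ℤ)
        + (((Icc 1 N).filter (fun n => moebius n = -1)).card : ℤ) := by
  classical
  have : (Icc 1 N).filter (fun n => moebius n ≠ 0)
      = (Icc 1 N).filter (fun n => moebius n = 1) ∪ (Icc 1 N).filter (fun n => moebius n = -1) := by
    rw [← Finset.filter_or]
    refine Finset.filter_congr fun n _ => ?_
    rcases moebius_tri n with h | h | h <;> simp [h]
  rw [this, Finset.card_union_of_disjoint]
  · push_cast; ring
  · rw [Finset.disjoint_left]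
    intro n hn hn'
    simp only [mem_filter] at hn hn'
    rw [hn.2] at hn'; exact absurd hn'.2 (by decide)

theorem stmt7 (x : ℝ) (hx : 1 ≤ x) :
    (Nminus x : ℚ) = -(Mertens (Real.sqrt x) : ℚ) +
      (1 / 2) * ∑ i ∈ Finset.Icc 1 ⌊Real.sqrt x⌋₊, ∑ j ∈ Finset.Icc 1 ⌊Real.sqrt x⌋₊,
        (moebius i * moebius j * ⌊x / (i * j : ℝ)⌋ : ℚ) +
      (1 / 2) * ∑ i ∈ Finset.Icc 1 ⌊Real.sqrt x⌋₊, (moebius i * ⌊x / (i ^ 2 : ℝ)⌋ : ℚ) := by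
  classical
  set N := ⌊x⌋₊ with hNdef
  set s := ⌊Real.sqrt x⌋₊ with hsdef
  have hx0 : (0:ℝ) ≤ x := le_trans zero_le_one hx
  have hN1 : 1 ≤ N := Nat.le_floor (by exact_mod_cast hx)
  have hchar : ∀ d : ℕ, 1 ≤ d → (d ≤ s ↔ d * d ≤ N) := by
    intro d hd
    rw [hsdef, Nat.le_floor_iff (Real.sqrt_nonneg x),
      Real.le_sqrt (by positivity) hx0, hNdef, Nat.le_floor_iff hx0]
    push_cast
    rw [sq]
  have hs1 : 1 ≤ s := (hchar 1 le_rfl).2 (by omega)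
  have hsN : s ≤ N := le_trans (Nat.le_mul_of_pos_left s (by omega)) ((hchar s hs1).1 le_rfl)
  have hNs : N < (s + 1) * (s + 1) := by
    by_contra h
    have := (hchar (s + 1) (by omega)).2 (by omega)
    omega
  -- floor conversions
  have hfloor : ∀ c : ℕ, 1 ≤ c → ⌊x / (c : ℝ)⌋ = ((N / c : ℕ) : ℤ) := by
    intro c hc
    have hc0 : (0:ℝ) < (c:ℝ) := by exact_mod_cast hc
    rw [← Int.natCast_floor_eq_floor (by positivity), Nat.floor_div_natCast, hNdef]
  -- the double sum in ℤ
  have hS2 : ∑ a ∈ Icc 1 s, ∑ b ∈ Icc 1 s, (moebius a : ℤ) * moebius b * ⌊x / (a * b : ℝ)⌋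
      = 2 * (∑ a ∈ Icc 1 s, (moebius a : ℤ)) - ∑ n ∈ Icc 1 N, (moebius n : ℤ) := by
    rw [← hyperbola N s hs1 hsN hNs]
    refine Finset.sum_congr rfl fun a ha => Finset.sum_congr rfl fun b hb => ?_
    simp only [mem_Icc] at ha hb
    have : ((a:ℝ) * b) = ((a * b : ℕ) : ℝ) := by push_cast; ring
    rw [this, hfloor (a * b) (by simpa using Nat.mul_le_mul ha.1 hb.1)]
  have hS1 : ∑ a ∈ Icc 1 s, (moebius a : ℤ) * ⌊x / ((a : ℝ) ^ 2)⌋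
      = ∑ n ∈ Icc 1 N, (if Squarefree n then (1:ℤ) else 0) := by
    rw [← Qcount N s hN1 hchar]
    refine Finset.sum_congr rfl fun a ha => ?_
    simp only [mem_Icc] at ha
    have : ((a:ℝ) ^ 2) = ((a * a : ℕ) : ℝ) := by push_cast; ring
    rw [this, hfloor (a * a) (by simpa using Nat.mul_le_mul ha.1 ha.1)]
  have hsq : ∑ n ∈ Icc 1 N, (if Squarefree n then (1:ℤ) else 0)
      = (((Icc 1 N).filter (fun n => moebius n ≠ 0)).card : ℤ) := by
    rw [Finset.sum_boole]
    congr 2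
    exact Finset.filter_congr fun n _ => (moebius_ne_zero_iff_squarefree).symm
  have hMN := sum_moebius_split N
  have hPQ := card_ne_zero_split N
  -- abbreviations
  set P := ((Icc 1 N).filter (fun n => moebius n = 1)).card with hP
  set Mi := ((Icc 1 N).filter (fun n => moebius n = -1)).card with hMi
  have hNminus : Nminus x = Mi := rfl
  have hMert : Mertens (Real.sqrt x) = ∑ a ∈ Icc 1 s, (moebius a : ℤ) := rfl
  -- cast everything to ℚ
  have c2 : ((∑ a ∈ Icc 1 s, ∑ b ∈ Icc 1 s,
        (moebius a : ℤ) * moebius b * ⌊x / (a * b : ℝ)⌋ : ℤ) : ℚ)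
      = ∑ i ∈ Icc 1 s, ∑ j ∈ Icc 1 s, (moebius i * moebius j * ⌊x / (i * j : ℝ)⌋ : ℚ) := by
    push_cast; rfl
  have c1 : ((∑ a ∈ Icc 1 s, (moebius a : ℤ) * ⌊x / ((a : ℝ) ^ 2)⌋ : ℤ) : ℚ)
      = ∑ i ∈ Icc 1 s, (moebius i * ⌊x / (i ^ 2 : ℝ)⌋ : ℚ) := by
    push_cast; rfl
  rw [hNminus, ← c2, ← c1, hS2, hS1, hsq, hPQ, hMert, hMN]
  push_cast
  ring
end

section
/- For every integer x ≥ 2, μ(x) = −Σ_{i=1}^{⌊√x⌋} Σ_{j=1}^{⌊√x⌋} μ(i)·μ(j)·[i·j divides x], where [i·j divides x] is 1 if i·j divides x and 0 otherwise. -/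
open ArithmeticFunction Finset

private lemma moeb_divsum (m : ℕ) : ∑ d ∈ m.divisors, (moebius d : ℤ) = if m = 1 then 1 else 0 := by
  have h := congrArg (fun f : ArithmeticFunction ℤ => f m) moebius_mul_coe_zeta
  simp only [coe_mul_zeta_apply, one_apply] at h
  exact h

private lemma moeb_sum_Icc (m n : ℕ) (h1 : 1 ≤ m) (h2 : m ≤ n) :
    ∑ j ∈ Finset.Icc 1 n, (moebius j : ℤ) * (if j ∣ m then 1 else 0)
      = if m = 1 then 1 else 0 := by
  have hc : ∀ j ∈ Finset.Icc 1 n, (moebius j : ℤ) * (if j ∣ m then 1 else 0)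
      = if j ∣ m then (moebius j : ℤ) else 0 := by
    intro j _; split <;> simp
  rw [Finset.sum_congr rfl hc, ← Finset.sum_filter]
  have hf : (Finset.Icc 1 n).filter (· ∣ m) = m.divisors := by
    ext d
    simp only [Finset.mem_filter, Finset.mem_Icc, Nat.mem_divisors]
    constructor
    · rintro ⟨_, hd⟩; exact ⟨hd, by omega⟩
    · rintro ⟨hd, _⟩
      have hd0 : 0 < d := Nat.pos_of_dvd_of_pos hd (by omega)
      exact ⟨⟨hd0, le_trans (Nat.le_of_dvd (by omega) hd) h2⟩, hd⟩
  rw [hf, moeb_divsum]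

private lemma auxInnerSum (x i n : ℕ) (hx : 1 ≤ x) (hn : x ≤ n) :
    ∑ j ∈ Finset.Icc 1 n, (moebius i : ℤ) * moebius j * (if i * j ∣ x then 1 else 0)
      = if i ∣ x ∧ x / i = 1 then (moebius i : ℤ) else 0 := by
  by_cases hi : i ∣ x
  · have hi0 : 0 < i := Nat.pos_of_dvd_of_pos hi hx
    have hdiv : ∀ j, i * j ∣ x ↔ j ∣ x / i := by
      intro j; rw [Nat.dvd_div_iff_mul_dvd hi]
    have hc : ∀ j ∈ Finset.Icc 1 n, (moebius i : ℤ) * moebius j * (if i * j ∣ x then 1 else 0)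
        = (moebius i : ℤ) * (moebius j * (if j ∣ x / i then 1 else 0)) := by
      intro j _; simp only [hdiv, mul_assoc]
    rw [Finset.sum_congr rfl hc, ← Finset.mul_sum,
      moeb_sum_Icc (x / i) n (Nat.one_le_div_iff hi0 |>.2 (Nat.le_of_dvd hx hi))
        (le_trans (Nat.div_le_self x i) hn)]
    simp [hi]
  · rw [if_neg (by tauto)]
    apply Finset.sum_eq_zero
    intro j _
    rw [if_neg (fun h => hi (dvd_trans ⟨j, rfl⟩ h)), mul_zero]

theorem stmt8 (x : ℕ) (hx : 2 ≤ x) :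
    moebius x = -∑ i ∈ Finset.Icc 1 (Nat.sqrt x), ∑ j ∈ Finset.Icc 1 (Nat.sqrt x),
      moebius i * moebius j * (if (i * j) ∣ x then 1 else 0) := by
  set s := Nat.sqrt x with hs
  have hx1 : 1 ≤ x := by omega
  have hs1 : 1 ≤ s := by
    have : 0 < s := Nat.sqrt_pos.2 (by omega)
    omega
  have hsx : s < x := Nat.sqrt_lt_self (by omega)
  have hsplit : Finset.Icc 1 x = Finset.Icc 1 s ∪ Finset.Ioc s x := by
    ext a
    simp only [Finset.mem_Icc, Finset.mem_union, Finset.mem_Ioc]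
    omega
  have hdisj : Disjoint (Finset.Icc 1 s) (Finset.Ioc s x) := by
    rw [Finset.disjoint_left]
    intro a ha hb
    simp only [Finset.mem_Icc, Finset.mem_Ioc] at ha hb
    omega
  -- the full sum equals μ x
  have hF : ∑ i ∈ Finset.Icc 1 x, ∑ j ∈ Finset.Icc 1 x,
      (moebius i : ℤ) * moebius j * (if i * j ∣ x then 1 else 0) = moebius x := by
    rw [Finset.sum_congr rfl (fun i _ => auxInnerSum x i x hx1 le_rfl)]
    rw [Finset.sum_eq_single x]
    · simp [Nat.div_self (by omega : 0 < x)]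
    · intro i _ hne
      rw [if_neg]
      rintro ⟨hd, hq⟩
      exact hne (by rw [← Nat.div_mul_cancel hd, hq, one_mul])
    · intro h
      exact absurd (Finset.mem_Icc.2 ⟨by omega, le_rfl⟩) h
  -- inner full sum vanishes for small i
  have hzero : ∀ i ∈ Finset.Icc 1 s, ∑ j ∈ Finset.Icc 1 x,
      (moebius i : ℤ) * moebius j * (if i * j ∣ x then 1 else 0) = 0 := by
    intro i hi
    rw [auxInnerSum x i x hx1 le_rfl, if_neg]
    rintro ⟨hd, hq⟩
    have : x = i := by rw [← Nat.div_mul_cancel hd, hq, one_mul]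
    simp only [Finset.mem_Icc] at hi
    omega
  -- the big-big block vanishes
  have hD : ∑ i ∈ Finset.Ioc s x, ∑ j ∈ Finset.Ioc s x,
      (moebius i : ℤ) * moebius j * (if i * j ∣ x then 1 else 0) = 0 := by
    apply Finset.sum_eq_zero; intro i hi
    apply Finset.sum_eq_zero; intro j hj
    simp only [Finset.mem_Ioc] at hi hj
    rw [if_neg, mul_zero]
    intro hd
    have h1 : i * j ≤ x := Nat.le_of_dvd (by omega) hd
    have h2 : x < (s + 1) * (s + 1) := Nat.lt_succ_sqrt x
    have h3 : (s + 1) * (s + 1) ≤ i * j := Nat.mul_le_mul (by omega) (by omega)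
    omega
  set S := ∑ i ∈ Finset.Icc 1 s, ∑ j ∈ Finset.Icc 1 s,
      (moebius i : ℤ) * moebius j * (if i * j ∣ x then 1 else 0) with hS
  have hB : ∑ i ∈ Finset.Icc 1 s, ∑ j ∈ Finset.Ioc s x,
      (moebius i : ℤ) * moebius j * (if i * j ∣ x then 1 else 0) = -S := by
    have : ∀ i ∈ Finset.Icc 1 s,
        ∑ j ∈ Finset.Ioc s x, (moebius i : ℤ) * moebius j * (if i * j ∣ x then 1 else 0)
        = -∑ j ∈ Finset.Icc 1 s, (moebius i : ℤ) * moebius j * (if i * j ∣ x then 1 else 0) := by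
      intro i hi
      have h0 := hzero i hi
      rw [hsplit, Finset.sum_union hdisj] at h0
      linarith
    rw [Finset.sum_congr rfl this, Finset.sum_neg_distrib]
  have hC : ∑ i ∈ Finset.Ioc s x, ∑ j ∈ Finset.Icc 1 s,
      (moebius i : ℤ) * moebius j * (if i * j ∣ x then 1 else 0) = -S := by
    rw [Finset.sum_comm]
    calc ∑ j ∈ Finset.Icc 1 s, ∑ i ∈ Finset.Ioc s x,
          (moebius i : ℤ) * moebius j * (if i * j ∣ x then 1 else 0)
        = ∑ i ∈ Finset.Icc 1 s, ∑ j ∈ Finset.Ioc s x,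
          (moebius i : ℤ) * moebius j * (if i * j ∣ x then 1 else 0) := by
          apply Finset.sum_congr rfl; intro a _
          apply Finset.sum_congr rfl; intro b _
          rw [mul_comm (moebius b : ℤ) (moebius a), mul_comm b a]
      _ = -S := hB
  have := hF
  rw [hsplit] at this
  rw [Finset.sum_union hdisj] at this
  have hrw : ∀ (t : Finset ℕ), ∀ i ∈ t, ∑ j ∈ Finset.Icc 1 s ∪ Finset.Ioc s x,
      (moebius i : ℤ) * moebius j * (if i * j ∣ x then 1 else 0)
      = (∑ j ∈ Finset.Icc 1 s, (moebius i : ℤ) * moebius j * (if i * j ∣ x then 1 else 0))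
      + ∑ j ∈ Finset.Ioc s x, (moebius i : ℤ) * moebius j * (if i * j ∣ x then 1 else 0) := by
    intro t i _; rw [Finset.sum_union hdisj]
  rw [Finset.sum_congr rfl (hrw _), Finset.sum_congr rfl (hrw _), Finset.sum_add_distrib,
    Finset.sum_add_distrib, hB, hC, hD, ← hS] at this
  linarith
end
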